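/- In the single circular inclusion setting, the truncation error of the localized characteristic function satisfies the bound ‖χ − χ^δ‖_{L^∞} ≤ log(R/(r+δ))/log(R/r), where χ^δ is the localized characteristic function on the annulus r < |x| < r+δ: explicitly χ^δ(x) = log((r+δ)/|x|)/log((r+δ)/r) on r ≤ |x| ≤ r+δ and 0 for |x| ≥ r+δ, and χ − χ^δ ≥ 0 everywhere. -/

import Mathlib

/-- for a single circular inclusion `B(0,r)` inside `B(0,R)`,
with the explicit global characteristic function `χ` and its localized
counterpart `χ^δ` (supported in the annulus `r < |x| < r+δ`), one has
`χ - χ^δ ≥ 0` everywhere and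
`‖χ - χ^δ‖_{L^∞} ≤ log(R/(r+δ))/log(R/r)`. -/
theorem stmt13 (r δ R : ℝ) (hr : 0 < r) (hδ : 0 < δ) (hR : r + δ < R)
    (χ χδ : EuclideanSpace ℝ (Fin 2) → ℝ)
    (hχ : ∀ x, χ x = if ‖x‖ ≤ r then 1
      else if ‖x‖ ≤ R then Real.log (R / ‖x‖) / Real.log (R / r) else 0)
    (hχδ : ∀ x, χδ x = if ‖x‖ ≤ r then 1
      else if ‖x‖ ≤ r + δ then
        Real.log ((r + δ) / ‖x‖) / Real.log ((r + δ) / r) else 0) :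
    (∀ x, 0 ≤ χ x - χδ x) ∧
    ∀ x, χ x - χδ x ≤ Real.log (R / (r + δ)) / Real.log (R / r) := by
  have hrδ : 0 < r + δ := by linarith
  have hR0 : 0 < R := by linarith
  have hab : Real.log r < Real.log (r + δ) := Real.log_lt_log hr (by linarith)
  have hbc : Real.log (r + δ) < Real.log R := Real.log_lt_log hrδ hR
  have hRr : Real.log (R / r) = Real.log R - Real.log r :=
    Real.log_div hR0.ne' hr.ne'
  have hRb : Real.log (R / (r + δ)) = Real.log R - Real.log (r + δ) :=
    Real.log_div hR0.ne' hrδ.ne'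
  have hca : 0 < Real.log R - Real.log r := by linarith
  have hba : 0 < Real.log (r + δ) - Real.log r := by linarith
  have hbound : 0 ≤ Real.log (R / (r + δ)) / Real.log (R / r) := by
    rw [hRr, hRb]; exact div_nonneg (by linarith) hca.le
  constructor
  · intro x
    rw [hχ x, hχδ x]
    set a := Real.log r
    set b := Real.log (r + δ)
    set c := Real.log R
    split_ifs with h1 h2 h3 h3
    · norm_num
    · -- r < ‖x‖ ≤ r+δ ≤ R
      have hx0 : (0:ℝ) < ‖x‖ := lt_trans hr (not_le.1 h1)
      have hRx : Real.log (R / ‖x‖) = c - Real.log ‖x‖ :=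
        Real.log_div hR0.ne' hx0.ne'
      have hbx : Real.log ((r + δ) / ‖x‖) = b - Real.log ‖x‖ :=
        Real.log_div hrδ.ne' hx0.ne'
      set u := Real.log ‖x‖ with hu
      have hau : a ≤ u := (Real.log_le_log_iff hr hx0).2 (not_le.1 h1).le
      have hub : u ≤ b := (Real.log_le_log_iff hx0 hrδ).2 h3
      rw [hRx, hbx, hRr]
      rw [Real.log_div hrδ.ne' hr.ne']
      have key : (b - u) / (b - a) ≤ (c - u) / (c - a) := by
        rw [div_le_div_iff₀ hba hca]
        nlinarith [mul_nonneg (sub_nonneg.2 hau) (sub_nonneg.2 hbc.le)]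
      linarith
    · -- r+δ < ‖x‖ ≤ R
      have hx0 : (0:ℝ) < ‖x‖ := lt_trans hr (not_le.1 h1)
      have hRx : Real.log (R / ‖x‖) = c - Real.log ‖x‖ :=
        Real.log_div hR0.ne' hx0.ne'
      have huc : Real.log ‖x‖ ≤ c := (Real.log_le_log_iff hx0 hR0).2 h2
      rw [hRx, hRr, sub_zero]
      apply div_nonneg (by linarith) hca.le
    · linarith [not_le.1 h2]
    · norm_num
  · intro x
    rw [hχ x, hχδ x]
    set a := Real.log r
    set b := Real.log (r + δ)
    set c := Real.log R
    split_ifs with h1 h2 h3 h3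
    · simpa using hbound
    · -- r < ‖x‖ ≤ r+δ ≤ R
      have hx0 : (0:ℝ) < ‖x‖ := lt_trans hr (not_le.1 h1)
      have hRx : Real.log (R / ‖x‖) = c - Real.log ‖x‖ :=
        Real.log_div hR0.ne' hx0.ne'
      have hbx : Real.log ((r + δ) / ‖x‖) = b - Real.log ‖x‖ :=
        Real.log_div hrδ.ne' hx0.ne'
      set u := Real.log ‖x‖ with hu
      have hau : a ≤ u := (Real.log_le_log_iff hr hx0).2 (not_le.1 h1).le
      have hub : u ≤ b := (Real.log_le_log_iff hx0 hrδ).2 h3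
      rw [hRx, hbx, hRr, hRb, Real.log_div hrδ.ne' hr.ne']
      have split1 : (c - u) / (c - a) = (c - b) / (c - a) + (b - u) / (c - a) := by
        field_simp
        ring
      have key : (b - u) / (c - a) ≤ (b - u) / (b - a) := by
        apply div_le_div_of_nonneg_left (by linarith) hba (by linarith)
      linarith
    · -- r+δ < ‖x‖ ≤ R
      have hx0 : (0:ℝ) < ‖x‖ := lt_trans hr (not_le.1 h1)
      have hRx : Real.log (R / ‖x‖) = c - Real.log ‖x‖ :=
        Real.log_div hR0.ne' hx0.ne'
      have hbu : b ≤ Real.log ‖x‖ := (Real.log_le_log_iff hrδ hx0).2 (not_le.1 h3).le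
      rw [hRx, hRr, hRb, sub_zero]
      gcongr
    · linarith [not_le.1 h2]
    · simpa using hbound
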